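/- The function φ(x) = 1/tanh²(x) − 1/(x·tanh(x)) is strictly increasing on (0, ∞). -/

import Mathlib

open Real Set

/-- generic positivity-from-derivative step -/
lemma pos_of_deriv_chain (f f' : ℝ → ℝ) (hf : ∀ x, HasDerivAt f (f' x) x)
    (h0 : f 0 = 0) (hpos : ∀ x, 0 < x → 0 < f' x) : ∀ x, 0 < x → 0 < f x := by
  intro x hx
  have mono : StrictMonoOn f (Set.Ici 0) := by
    apply strictMonoOn_of_deriv_pos (convex_Ici 0)
      (fun y _ => (hf y).continuousAt.continuousWithinAt)
    intro y hy
    rw [interior_Ici] at hy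
    rw [(hf y).deriv]
    exact hpos y hy
  have := mono Set.self_mem_Ici (Set.mem_Ici.2 hx.le) hx
  simpa [h0] using this

lemma G6_pos (x : ℝ) (hx : 0 < x) :
    0 < 2184*sinh x^2*cosh x + 732*cosh x^3 - 220*cosh x - 92*(x*sinh x) - 8*(x^2*cosh x) := by
  have hs : x ≤ sinh x := Real.self_le_sinh_iff.2 hx.le
  have hsc : sinh x < cosh x := Real.sinh_lt_cosh x
  have hc : (0:ℝ) < cosh x := Real.cosh_pos x
  have hs0 : 0 < sinh x := Real.sinh_pos_iff.2 hx
  have hsq : cosh x ^ 2 - sinh x ^ 2 = 1 := Real.cosh_sq_sub_sinh_sq x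
  nlinarith [mul_pos hc (mul_pos hc hc), mul_pos hs0 (mul_pos hs0 hc), sq_nonneg (sinh x - x),
    mul_pos hx hs0, mul_pos hc hs0, sq_nonneg (cosh x - 1), mul_pos (mul_pos hx hx) hc,
    mul_nonneg (mul_nonneg hx.le hx.le) (sub_nonneg.2 hs), mul_pos hx (mul_pos hs0 hc),
    mul_nonneg (sub_nonneg.2 hs) (mul_nonneg hs0.le hc.le), sq_nonneg (x - 1), mul_pos hx hc]

lemma G5_pos (x : ℝ) (hx : 0 < x) :
    0 < 240*sinh x^3 + 732*(cosh x^2*sinh x) - 144*sinh x - 76*(x*cosh x) - 8*(x^2*sinh x) := by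
  apply pos_of_deriv_chain _
    (fun x => 2184*sinh x^2*cosh x + 732*cosh x^3 - 220*cosh x - 92*(x*sinh x) - 8*(x^2*cosh x))
    (fun y => ?_) (by simp) G6_pos x hx
  have hs := Real.hasDerivAt_sinh y
  have hc := Real.hasDerivAt_cosh y
  have h := (((((hs.pow 3).const_mul (240:ℝ)).add (((hc.pow 2).mul hs).const_mul (732:ℝ))).sub
      (hs.const_mul (144:ℝ))).sub (((hasDerivAt_id' y).mul hc).const_mul (76:ℝ))).sub
      (((hasDerivAt_pow 2 y).mul hs).const_mul (8:ℝ))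
  refine h.congr_deriv ?_
  push_cast [Pi.pow_apply]
  ring

lemma G4_pos (x : ℝ) (hx : 0 < x) :
    0 < 240*(sinh x^2*cosh x) + 84*cosh x^3 - 84*cosh x - 60*(x*sinh x) - 8*(x^2*cosh x) := by
  apply pos_of_deriv_chain _
    (fun x => 240*sinh x^3 + 732*(cosh x^2*sinh x) - 144*sinh x - 76*(x*cosh x) - 8*(x^2*sinh x))
    (fun y => ?_) (by simp) G5_pos x hx
  have hs := Real.hasDerivAt_sinh y
  have hc := Real.hasDerivAt_cosh y
  have h := ((((((hs.pow 2).mul hc).const_mul (240:ℝ)).add ((hc.pow 3).const_mul (84:ℝ))).sub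
      (hc.const_mul (84:ℝ))).sub (((hasDerivAt_id' y).mul hs).const_mul (60:ℝ))).sub
      (((hasDerivAt_pow 2 y).mul hc).const_mul (8:ℝ))
  refine h.congr_deriv ?_
  push_cast [Pi.pow_apply]
  ring

lemma G3_pos (x : ℝ) (hx : 0 < x) :
    0 < 24*sinh x^3 + 84*(cosh x^2*sinh x) - 40*sinh x - 44*(x*cosh x) - 8*(x^2*sinh x) := by
  apply pos_of_deriv_chain _
    (fun x => 240*(sinh x^2*cosh x) + 84*cosh x^3 - 84*cosh x - 60*(x*sinh x) - 8*(x^2*cosh x))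
    (fun y => ?_) (by simp) G4_pos x hx
  have hs := Real.hasDerivAt_sinh y
  have hc := Real.hasDerivAt_cosh y
  have h := (((((hs.pow 3).const_mul (24:ℝ)).add (((hc.pow 2).mul hs).const_mul (84:ℝ))).sub
      (hs.const_mul (40:ℝ))).sub (((hasDerivAt_id' y).mul hc).const_mul (44:ℝ))).sub
      (((hasDerivAt_pow 2 y).mul hs).const_mul (8:ℝ))
  refine h.congr_deriv ?_
  push_cast [Pi.pow_apply]
  ring

lemma G2_pos (x : ℝ) (hx : 0 < x) :
    0 < 24*(sinh x^2*cosh x) + 12*cosh x^3 - 12*cosh x - 28*(x*sinh x) - 8*(x^2*cosh x) := by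
  apply pos_of_deriv_chain _
    (fun x => 24*sinh x^3 + 84*(cosh x^2*sinh x) - 40*sinh x - 44*(x*cosh x) - 8*(x^2*sinh x))
    (fun y => ?_) (by simp) G3_pos x hx
  have hs := Real.hasDerivAt_sinh y
  have hc := Real.hasDerivAt_cosh y
  have h := ((((((hs.pow 2).mul hc).const_mul (24:ℝ)).add ((hc.pow 3).const_mul (12:ℝ))).sub
      (hc.const_mul (12:ℝ))).sub (((hasDerivAt_id' y).mul hs).const_mul (28:ℝ))).sub
      (((hasDerivAt_pow 2 y).mul hc).const_mul (8:ℝ))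
  refine h.congr_deriv ?_
  push_cast [Pi.pow_apply]
  ring

lemma G1_pos (x : ℝ) (hx : 0 < x) :
    0 < 12*(cosh x^2*sinh x) - 12*(x*cosh x) - 8*(x^2*sinh x) := by
  apply pos_of_deriv_chain _
    (fun x => 24*(sinh x^2*cosh x) + 12*cosh x^3 - 12*cosh x - 28*(x*sinh x) - 8*(x^2*cosh x))
    (fun y => ?_) (by simp) G2_pos x hx
  have hs := Real.hasDerivAt_sinh y
  have hc := Real.hasDerivAt_cosh y
  have h := ((((hc.pow 2).mul hs).const_mul (12:ℝ)).sub
      (((hasDerivAt_id' y).mul hc).const_mul (12:ℝ))).sub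
      (((hasDerivAt_pow 2 y).mul hs).const_mul (8:ℝ))
  refine h.congr_deriv ?_
  push_cast [Pi.pow_apply]
  ring

lemma G0_pos (x : ℝ) (hx : 0 < x) :
    0 < 4*cosh x^3 - 4*cosh x + 4*(x*sinh x) - 8*(x^2*cosh x) := by
  apply pos_of_deriv_chain _
    (fun x => 12*(cosh x^2*sinh x) - 12*(x*cosh x) - 8*(x^2*sinh x))
    (fun y => ?_) (by simp) G1_pos x hx
  have hs := Real.hasDerivAt_sinh y
  have hc := Real.hasDerivAt_cosh y
  have h := ((((hc.pow 3).const_mul (4:ℝ)).sub (hc.const_mul (4:ℝ))).add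
      (((hasDerivAt_id' y).mul hs).const_mul (4:ℝ))).sub
      (((hasDerivAt_pow 2 y).mul hc).const_mul (8:ℝ))
  refine h.congr_deriv ?_
  push_cast [Pi.pow_apply]
  ring

lemma key_pos (x : ℝ) (hx : 0 < x) :
    0 < cosh x * sinh x ^ 2 + x * sinh x - 2 * x^2 * cosh x := by
  have h := G0_pos x hx
  have hsq : cosh x ^ 2 - sinh x ^ 2 = 1 := Real.cosh_sq_sub_sinh_sq x
  nlinarith [h, hsq, Real.cosh_pos x]

theorem stmt_3 :
    StrictMonoOn (fun x : ℝ => 1 / Real.tanh x ^ 2 - 1 / (x * Real.tanh x))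
      (Set.Ioi (0 : ℝ)) := by
  have hψ : StrictMonoOn (fun x : ℝ => cosh x ^ 2 / sinh x ^ 2 - cosh x / (x * sinh x))
      (Set.Ioi (0 : ℝ)) := by
    have hder : ∀ x : ℝ, 0 < x → HasDerivAt
        (fun x : ℝ => cosh x ^ 2 / sinh x ^ 2 - cosh x / (x * sinh x))
        ((↑2 * cosh x ^ 1 * sinh x * sinh x ^ 2 - cosh x ^ 2 * (↑2 * sinh x ^ 1 * cosh x)) / (sinh x ^ 2) ^ 2
          - (sinh x * (x * sinh x) - cosh x * (1 * sinh x + x * cosh x)) / (x * sinh x) ^ 2) x := by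
      intro x hx
      have hs0 : 0 < sinh x := Real.sinh_pos_iff.2 hx
      have hs := Real.hasDerivAt_sinh x
      have hc := Real.hasDerivAt_cosh x
      exact ((hc.pow 2).div (hs.pow 2) (pow_ne_zero 2 hs0.ne')).sub
        (hc.div ((hasDerivAt_id' x).mul hs) (mul_pos hx hs0).ne')
    apply strictMonoOn_of_deriv_pos (convex_Ioi 0)
    · intro y hy
      exact (hder y hy).continuousAt.continuousWithinAt
    · intro x hx
      rw [interior_Ioi] at hx
      rw [(hder x hx).deriv]
      have hs0 : 0 < sinh x := Real.sinh_pos_iff.2 hx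
      have hc0 : (0:ℝ) < cosh x := Real.cosh_pos x
      have hsq : cosh x ^ 2 - sinh x ^ 2 = 1 := Real.cosh_sq_sub_sinh_sq x
      have key := key_pos x hx
      rw [div_sub_div _ _ (pow_ne_zero 2 (pow_ne_zero 2 hs0.ne')) (pow_ne_zero 2 (mul_pos hx hs0).ne')]
      apply div_pos ?_ (mul_pos (pow_pos (pow_pos hs0 2) 2) (pow_pos (mul_pos hx hs0) 2))
      have e0 : cosh x ^ 2 - sinh x ^ 2 - 1 = 0 := by rw [hsq]; ring
      have e : (cosh x ^ 2 - sinh x ^ 2 - 1) * (x * sinh x ^ 4 - 2 * x^2 * cosh x * sinh x ^ 3) = 0 := by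
        rw [e0, zero_mul]
      nlinarith [mul_pos (pow_pos hs0 3) key, e]
  intro a ha b hb hab
  have heq : ∀ x : ℝ, 0 < x →
      (1 / Real.tanh x ^ 2 - 1 / (x * Real.tanh x)) =
      (cosh x ^ 2 / sinh x ^ 2 - cosh x / (x * sinh x)) := by
    intro x hx
    have hs0 : (0:ℝ) < sinh x := Real.sinh_pos_iff.2 hx
    have hc0 : (0:ℝ) < cosh x := Real.cosh_pos x
    rw [Real.tanh_eq_sinh_div_cosh]
    field_simp
  simp only [mem_Ioi] at ha hb
  simpa only [heq a ha, heq b hb] using hψ ha hb hab
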